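/- There exists a constant c₀ > 0 with the following property. Let a, b, c ∈ ℝ³ be nonzero vectors with a = b + c and |c| ≤ min(|a|, |b|). Then |p(|a|) − p(|b|) − p(|c|)| ≥ c₀·( |c|·((1 − cos[c,a]) + (1 − cos[b,a])) + |a||b||c| / ((1 + |a||b|)(1 + |c|²)) ), where cos[u,v] = ⟨u,v⟩/(|u||v|) denotes the cosine of the angle between nonzero vectors u and v. -/
import Mathlib

open scoped RealInnerProductSpace

noncomputable def q (r : ℝ) : ℝ := Real.sqrt ((2 + r ^ 2) / (1 + r ^ 2))
noncomputable def p (r : ℝ) : ℝ := r * q r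


lemma q_sq (r : ℝ) : q r ^ 2 = (2 + r ^ 2) / (1 + r ^ 2) := by
  rw [q, Real.sq_sqrt]; positivity

lemma one_le_q (r : ℝ) : 1 ≤ q r := by
  have h : (1:ℝ) ≤ (2 + r ^ 2) / (1 + r ^ 2) := by
    rw [le_div_iff₀ (by positivity)]; nlinarith [sq_nonneg r]
  calc (1:ℝ) = Real.sqrt 1 := by simp
    _ ≤ q r := Real.sqrt_le_sqrt h

lemma q_le (r : ℝ) : q r ≤ Real.sqrt 2 := by
  apply Real.sqrt_le_sqrt
  rw [div_le_iff₀ (by positivity)]; nlinarith [sq_nonneg r]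

lemma q_anti {x y : ℝ} (hxy : x ≤ y) (hx : 0 ≤ x) : q y ≤ q x := by
  apply Real.sqrt_le_sqrt
  rw [div_le_div_iff₀ (by positivity) (by positivity)]
  nlinarith [sq_nonneg x, sq_nonneg y, mul_le_mul hxy hxy hx (hx.trans hxy)]

lemma p_sq (r : ℝ) : p r ^ 2 = (1 + r ^ 2) - 1 / (1 + r ^ 2) := by
  rw [p, mul_pow, q_sq]
  have : (1:ℝ) + r ^ 2 ≠ 0 := by positivity
  field_simp
  ring

lemma p_nonneg {r : ℝ} (hr : 0 ≤ r) : 0 ≤ p r :=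
  mul_nonneg hr (le_trans zero_le_one (one_le_q r))

lemma p_gap {x y : ℝ} (hx : 0 ≤ x) (hxy : x ≤ y) :
    (y - x) / Real.sqrt 2 ≤ p y - p x := by
  rcases eq_or_lt_of_le hxy with rfl | hlt
  · simp
  have hy : 0 < y := lt_of_le_of_lt hx hlt
  have hpy : 0 < p y := lt_of_lt_of_le hy (by
    calc y = y * 1 := by ring
      _ ≤ y * q y := by nlinarith [one_le_q y])
  have hpx : 0 ≤ p x := p_nonneg hx
  have hsumpos : 0 < p x + p y := by linarith
  have hs2 : (0:ℝ) < Real.sqrt 2 := by positivity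
  have hsq : y ^ 2 - x ^ 2 ≤ p y ^ 2 - p x ^ 2 := by
    rw [p_sq, p_sq]
    have h1 : (1:ℝ) / (1 + y ^ 2) ≤ 1 / (1 + x ^ 2) := by
      apply one_div_le_one_div_of_le (by positivity)
      nlinarith
    linarith
  have hub : p x + p y ≤ Real.sqrt 2 * (x + y) := by
    have h1 : p x ≤ Real.sqrt 2 * x := by
      rw [p]; nlinarith [q_le x]
    have h2 : p y ≤ Real.sqrt 2 * y := by
      rw [p]; nlinarith [q_le y]
    linarith
  have e1 : (y - x) / Real.sqrt 2 = (y ^ 2 - x ^ 2) / (Real.sqrt 2 * (x + y)) := by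
    rw [div_eq_div_iff (ne_of_gt hs2) (by positivity)]; ring
  have e2 : p y - p x = (p y ^ 2 - p x ^ 2) / (p x + p y) := by
    rw [eq_div_iff (ne_of_gt hsumpos)]; ring
  rw [e1, e2]
  calc (y ^ 2 - x ^ 2) / (Real.sqrt 2 * (x + y))
      ≤ (y ^ 2 - x ^ 2) / (p x + p y) := by
        apply div_le_div_of_nonneg_left (by nlinarith) hsumpos hub
    _ ≤ (p y ^ 2 - p x ^ 2) / (p x + p y) := by gcongr

lemma q_gap {x y : ℝ} (hx : 0 ≤ x) (hxy : x ≤ y) :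
    (y ^ 2 - x ^ 2) / (2 * Real.sqrt 2 * ((1 + x ^ 2) * (1 + y ^ 2))) ≤ q x - q y := by
  have hdiff : 0 ≤ q x - q y := sub_nonneg.mpr (q_anti hxy hx)
  have hsum : q x + q y ≤ 2 * Real.sqrt 2 := by
    have := q_le x; have := q_le y; linarith
  have hS : (0:ℝ) < (1 + x ^ 2) * (1 + y ^ 2) := by positivity
  have hkey : y ^ 2 - x ^ 2 = (q x - q y) * (q x + q y) * ((1 + x ^ 2) * (1 + y ^ 2)) := by
    have : (q x - q y) * (q x + q y) = q x ^ 2 - q y ^ 2 := by ring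
    rw [this, q_sq, q_sq]
    field_simp
    ring
  rw [div_le_iff₀ (by positivity)]
  have h1 : (q x - q y) * (q x + q y) ≤ (q x - q y) * (2 * Real.sqrt 2) :=
    mul_le_mul_of_nonneg_left hsum hdiff
  nlinarith [mul_le_mul_of_nonneg_right h1 hS.le]

lemma key (α β γ : ℝ) (hα : 0 < α) (hβ : 0 < β) (hγ : 0 < γ)
    (h2 : γ ≤ β) (h3 : α ≤ β + γ) :
    (1/32) * (4 * (β + γ - α) + α * β * γ / ((1 + α * β) * (1 + γ ^ 2))) ≤
      p β + p γ - p α := by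
  have hs2a : (1:ℝ) ≤ Real.sqrt 2 := by
    calc (1:ℝ) = Real.sqrt 1 := by simp
      _ ≤ Real.sqrt 2 := Real.sqrt_le_sqrt (by norm_num)
  have hs2b : Real.sqrt 2 ≤ 3/2 := by
    rw [show (3:ℝ)/2 = Real.sqrt ((3/2)^2) by rw [Real.sqrt_sq]; norm_num]
    apply Real.sqrt_le_sqrt; norm_num
  have hs2pos : (0:ℝ) < Real.sqrt 2 := by linarith
  -- second piece: p(β+γ) - p α ≥ (β+γ-α)/√2
  have hgap : (β + γ - α) / Real.sqrt 2 ≤ p (β + γ) - p α := p_gap hα.le h3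
  -- first piece: D = p β + p γ - p (β+γ)
  have hD : p β + p γ - p (β + γ) = β * (q β - q (β + γ)) + γ * (q γ - q (β + γ)) := by
    simp only [p]; ring
  have hq1 : ((β + γ) ^ 2 - γ ^ 2) / (2 * Real.sqrt 2 * ((1 + γ ^ 2) * (1 + (β + γ) ^ 2)))
      ≤ q γ - q (β + γ) := q_gap hγ.le (by linarith)
  have hq2 : 0 ≤ q β - q (β + γ) := sub_nonneg.mpr (q_anti (by linarith) hβ.le)
  -- step A : β²γ/(16(1+β²)(1+γ²)) ≤ γ * (lower bound of hq1)
  have hstepA : β ^ 2 * γ / (16 * ((1 + β ^ 2) * (1 + γ ^ 2))) ≤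
      γ * (((β + γ) ^ 2 - γ ^ 2) / (2 * Real.sqrt 2 * ((1 + γ ^ 2) * (1 + (β + γ) ^ 2)))) := by
    rw [mul_div_assoc'] -- γ * (x/y) = γ*x/y
    rw [div_le_div_iff₀ (by positivity) (by positivity)]
    have e2 : β ^ 2 * (1 + (β + γ) ^ 2) ≤ 4 * β ^ 2 * (1 + β ^ 2) := by
      nlinarith [mul_nonneg (sq_nonneg β)
        (show (0:ℝ) ≤ 4 * β ^ 2 - (β + γ) ^ 2 by nlinarith [mul_nonneg (sub_nonneg.2 h2) (show (0:ℝ) ≤ 3 * β + γ by linarith)])]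
    have e3 : 2 * Real.sqrt 2 * (β ^ 2 * (1 + (β + γ) ^ 2)) ≤ 12 * (β ^ 2 * (1 + β ^ 2)) := by
      have h1 : 2 * Real.sqrt 2 ≤ 3 := by linarith
      calc 2 * Real.sqrt 2 * (β ^ 2 * (1 + (β + γ) ^ 2))
          ≤ 3 * (4 * β ^ 2 * (1 + β ^ 2)) :=
            mul_le_mul h1 e2 (by positivity) (by norm_num)
        _ = 12 * (β ^ 2 * (1 + β ^ 2)) := by ring
    have gpos : (0:ℝ) ≤ γ * (1 + γ ^ 2) := by positivity
    have e4 := mul_le_mul_of_nonneg_right e3 gpos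
    have e5 : 12 * (β ^ 2 * (1 + β ^ 2)) * (γ * (1 + γ ^ 2)) ≤
        γ * ((β + γ) ^ 2 - γ ^ 2) * (16 * ((1 + β ^ 2) * (1 + γ ^ 2))) := by
      nlinarith [mul_nonneg (mul_nonneg
        (show (0:ℝ) ≤ 16 * β * (β + 2 * γ) - 12 * β ^ 2 by nlinarith) gpos)
        (show (0:ℝ) ≤ 1 + β ^ 2 by positivity)]
    nlinarith [e4, e5]
  have hDlow : β ^ 2 * γ / (16 * ((1 + β ^ 2) * (1 + γ ^ 2))) ≤ p β + p γ - p (β + γ) := by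
    rw [hD]
    have := mul_le_mul_of_nonneg_left hq1 hγ.le
    nlinarith [mul_nonneg hβ.le hq2]
  -- step B : F ≤ 2 β²γ/((1+β²)(1+γ²))
  have hstepB : α * β * γ / ((1 + α * β) * (1 + γ ^ 2)) ≤
      2 * (β ^ 2 * γ) / ((1 + β ^ 2) * (1 + γ ^ 2)) := by
    rw [div_le_div_iff₀ (by positivity) (by positivity)]
    have hα2β : α ≤ 2 * β := by linarith
    nlinarith [mul_pos hβ hγ, sq_nonneg γ, mul_nonneg (mul_nonneg hβ.le hγ.le) (sq_nonneg γ),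
      mul_nonneg (mul_nonneg (mul_nonneg hβ.le hβ.le) hβ.le) (mul_nonneg hγ.le (sq_nonneg γ)),
      mul_nonneg (mul_nonneg hβ.le hβ.le) (mul_nonneg hβ.le hγ.le)]
  -- combine
  have hc1 : (β + γ - α) / 8 ≤ (β + γ - α) / Real.sqrt 2 := by
    apply div_le_div_of_nonneg_left (by linarith) hs2pos (by linarith)
  
  have heq : 2 * (β ^ 2 * γ) / ((1 + β ^ 2) * (1 + γ ^ 2)) =
      32 * (β ^ 2 * γ / (16 * ((1 + β ^ 2) * (1 + γ ^ 2)))) := by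
    field_simp
    ring
  linarith

set_option maxHeartbeats 1000000 in
theorem stmt6 :
    ∃ c₀ : ℝ, 0 < c₀ ∧
      ∀ a b c : EuclideanSpace ℝ (Fin 3), a ≠ 0 → b ≠ 0 → c ≠ 0 →
        a = b + c → ‖c‖ ≤ min ‖a‖ ‖b‖ →
        c₀ * (‖c‖ * ((1 - ⟪c, a⟫ / (‖c‖ * ‖a‖)) + (1 - ⟪b, a⟫ / (‖b‖ * ‖a‖))) +
              ‖a‖ * ‖b‖ * ‖c‖ / ((1 + ‖a‖ * ‖b‖) * (1 + ‖c‖ ^ 2)))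
          ≤ |p ‖a‖ - p ‖b‖ - p ‖c‖| := by
  refine ⟨1/32, by norm_num, ?_⟩
  intro a b c ha hb hc hab hmin
  set α := ‖a‖ with hαd
  set β := ‖b‖ with hβd
  set γ := ‖c‖ with hγd
  have hα : 0 < α := norm_pos_iff.mpr ha
  have hβ : 0 < β := norm_pos_iff.mpr hb
  have hγ : 0 < γ := norm_pos_iff.mpr hc
  have hγα : γ ≤ α := le_trans hmin (min_le_left _ _)
  have hγβ : γ ≤ β := le_trans hmin (min_le_right _ _)
  have htri : α ≤ β + γ := by rw [hαd, hab]; exact norm_add_le b c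
  have htri2 : β ≤ α + γ := by
    have : b = a - c := by rw [hab]; abel
    rw [hβd, this]; exact norm_sub_le a c
  have hsq : α ^ 2 = β ^ 2 + 2 * ⟪b, c⟫ + γ ^ 2 := by
    rw [hαd, hab]; exact norm_add_sq_real b c
  have hca : ⟪c, a⟫ = ⟪b, c⟫ + γ ^ 2 := by
    rw [hab, inner_add_right, real_inner_comm c b, real_inner_self_eq_norm_sq]
  have hba : ⟪b, a⟫ = β ^ 2 + ⟪b, c⟫ := by
    rw [hab, inner_add_right, real_inner_self_eq_norm_sq]
  have hCS : ⟪b, c⟫ ≤ β * γ := real_inner_le_norm b c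
  have ht : ⟪b, c⟫ = (α ^ 2 - β ^ 2 - γ ^ 2) / 2 := by linarith
  -- Angle bound
  have hAngle : γ * ((1 - ⟪c, a⟫ / (γ * α)) + (1 - ⟪b, a⟫ / (β * α))) ≤
      4 * (β + γ - α) := by
    rw [hca, hba, ht]
    rw [show γ * ((1 - ((α ^ 2 - β ^ 2 - γ ^ 2) / 2 + γ ^ 2) / (γ * α)) +
          (1 - (β ^ 2 + (α ^ 2 - β ^ 2 - γ ^ 2) / 2) / (β * α))) =
        (2 * α * β * γ - β * ((α ^ 2 - β ^ 2 - γ ^ 2) / 2 + γ ^ 2)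
          - γ * (β ^ 2 + (α ^ 2 - β ^ 2 - γ ^ 2) / 2)) / (α * β) by
      field_simp; ring]
    rw [div_le_iff₀ (by positivity)]
    have h3 : 0 ≤ (β + γ - α) * (8 * α * β + 4 * β * γ - (β + γ) * (β + γ + α)) := by
      apply mul_nonneg (by linarith)
      nlinarith [mul_nonneg (sub_nonneg.2 hγβ) (show (0:ℝ) ≤ α by linarith),
        mul_nonneg hγ.le hβ.le, mul_pos hα hβ, mul_pos hα hγ]
    nlinarith [h3]
  have hkey := key α β γ hα hβ hγ hγβ htri
  have hFnn : 0 ≤ α * β * γ / ((1 + α * β) * (1 + γ ^ 2)) := by positivity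
  have habs : |p α - p β - p γ| = p β + p γ - p α := by
    rw [abs_of_nonpos (by nlinarith)]
    ring
  rw [habs]
  nlinarith [hkey, hAngle]
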